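/- Work on a probability space (Ω, 𝒜, P) equipped with a filtration (ℱ_k)_{k∈ℕ} of sub-σ-algebras of 𝒜, and let p ∈ (0,1]. For each k ∈ ℕ let W_k be a {0,1}-valued ℱ_k-measurable random variable and let E_k ∈ 𝒜 be an event with P[E_k | ℱ_k] ≥ p almost surely. Let N : Ω → ℕ ∪ {∞} satisfy {k < N} ∈ ℱ_k for every k ∈ ℕ, and assume E[Σ_{k<N} W_k] < ∞. Then E[Σ_{k<N} W_k·(1 − 1_{E_k})] ≤ ((1−p)/p)·E[Σ_{k<N} W_k·1_{E_k}]. -/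

import Mathlib

open MeasureTheory
open scoped ENNReal

/-- Lemma 3.4 of the paper (Cartis–Scheinberg, Lemma 2.6): with conditional probability
of accuracy at least `p`, the expected number of inaccurate weighted iterations before
`N` is at most `((1−p)/p)` times the expected number of accurate ones. -/
theorem expected_inaccurate_le
    {Ω : Type*} {mΩ : MeasurableSpace Ω} (μ : Measure Ω) [IsProbabilityMeasure μ]
    (ℱ : Filtration ℕ mΩ) (p : ℝ) (hp0 : 0 < p) (hp1 : p ≤ 1)
    (W : ℕ → Ω → ℝ)
    (hW01 : ∀ k ω, W k ω = 0 ∨ W k ω = 1)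
    (hWmeas : ∀ k, Measurable[ℱ k] (W k))
    (E : ℕ → Set Ω) (hE : ∀ k, MeasurableSet (E k))
    (hEp : ∀ k, ∀ᵐ ω ∂μ,
      p ≤ (μ[(E k).indicator (fun _ => (1 : ℝ)) | ℱ k]) ω)
    (N : Ω → ℕ∞)
    (hN : ∀ k, MeasurableSet[ℱ k] {ω | (k : ℕ∞) < N ω})
    (hfin : (∫⁻ ω, ∑' (k : ℕ), ({ω' | (k : ℕ∞) < N ω'}.indicator (fun _ => (1 : ℝ≥0∞)) ω) *
      ENNReal.ofReal (W k ω) ∂μ) ≠ ⊤) :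
    ∫⁻ ω, ∑' (k : ℕ), ({ω' | (k : ℕ∞) < N ω'}.indicator (fun _ => (1 : ℝ≥0∞)) ω) *
          ENNReal.ofReal (W k ω) * (((E k)ᶜ).indicator (fun _ => (1 : ℝ≥0∞)) ω) ∂μ
      ≤ ENNReal.ofReal ((1 - p) / p) *
        ∫⁻ ω, ∑' (k : ℕ), ({ω' | (k : ℕ∞) < N ω'}.indicator (fun _ => (1 : ℝ≥0∞)) ω) *
          ENNReal.ofReal (W k ω) * ((E k).indicator (fun _ => (1 : ℝ≥0∞)) ω) ∂μ := by
  classical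
  set c := ENNReal.ofReal ((1 - p) / p) with hc
  set A : ℕ → Set Ω := fun k => {ω | (k : ℕ∞) < N ω} ∩ {ω | W k ω = 1} with hA
  have hAmf : ∀ k, MeasurableSet[ℱ k] (A k) := fun k =>
    (hN k).inter (hWmeas k (measurableSet_singleton 1))
  have hAm : ∀ k, MeasurableSet (A k) := fun k => ℱ.le k _ (hAmf k)
  -- pointwise identification with indicators
  have hpt : ∀ (k : ℕ) (S : Set Ω) (ω : Ω),
      ({ω' | (k : ℕ∞) < N ω'}.indicator (fun _ => (1 : ℝ≥0∞)) ω) *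
        ENNReal.ofReal (W k ω) * (S.indicator (fun _ => (1 : ℝ≥0∞)) ω) =
      (A k ∩ S).indicator (fun _ => (1 : ℝ≥0∞)) ω := by
    intro k S ω
    rcases hW01 k ω with h0 | h1
    · have hmem : ω ∉ A k ∩ S := fun h => by
        have := h.1.2; simp only [Set.mem_setOf_eq] at this; rw [h0] at this; norm_num at this
      rw [Set.indicator_of_notMem hmem, h0]
      simp
    · by_cases hN' : (k : ℕ∞) < N ω
      · by_cases hS : ω ∈ S
        · have hmem : ω ∈ A k ∩ S := ⟨⟨hN', h1⟩, hS⟩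
          rw [Set.indicator_of_mem hmem, Set.indicator_of_mem (show ω ∈ {ω' | (k:ℕ∞) < N ω'} from hN'), Set.indicator_of_mem hS, h1]
          simp
        · have hmem : ω ∉ A k ∩ S := fun h => hS h.2
          rw [Set.indicator_of_notMem hmem, Set.indicator_of_notMem hS, mul_zero]
      · have hmem : ω ∉ A k ∩ S := fun h => hN' h.1.1
        rw [Set.indicator_of_notMem hmem, Set.indicator_of_notMem (show ω ∉ {ω' | (k:ℕ∞) < N ω'} from hN'), zero_mul, zero_mul]
  -- rewrite both sides as tsum of measures
  have hrw : ∀ (S : ℕ → Set Ω), (∀ k, MeasurableSet (S k)) →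
      ∫⁻ ω, ∑' (k : ℕ), ({ω' | (k : ℕ∞) < N ω'}.indicator (fun _ => (1 : ℝ≥0∞)) ω) *
        ENNReal.ofReal (W k ω) * ((S k).indicator (fun _ => (1 : ℝ≥0∞)) ω) ∂μ
      = ∑' (k : ℕ), μ (A k ∩ S k) := by
    intro S hS
    have : ∀ ω, (∑' (k : ℕ), ({ω' | (k : ℕ∞) < N ω'}.indicator (fun _ => (1 : ℝ≥0∞)) ω) *
        ENNReal.ofReal (W k ω) * ((S k).indicator (fun _ => (1 : ℝ≥0∞)) ω)) =
        ∑' (k : ℕ), (A k ∩ S k).indicator (fun _ => (1 : ℝ≥0∞)) ω := by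
      intro ω; exact tsum_congr fun k => hpt k (S k) ω
    rw [lintegral_congr this, lintegral_tsum fun k =>
      ((measurable_const.indicator ((hAm k).inter (hS k))).aemeasurable)]
    exact tsum_congr fun k => by
      rw [lintegral_indicator ((hAm k).inter (hS k))]; simp
  rw [hrw (fun k => (E k)ᶜ) (fun k => (hE k).compl), hrw E hE, ← ENNReal.tsum_mul_left]
  refine ENNReal.tsum_le_tsum fun k => ?_
  -- key estimate : p * μ (A k) ≤ μ (A k ∩ E k)
  have hint : Integrable ((E k).indicator (fun _ => (1 : ℝ))) μ :=
    (integrable_const (1 : ℝ)).indicator (hE k)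
  have hset : ∫ ω in A k, (μ[(E k).indicator (fun _ => (1 : ℝ)) | ℱ k]) ω ∂μ
      = (μ (A k ∩ E k)).toReal := by
    rw [setIntegral_condExp (ℱ.le k) hint (hAmf k), setIntegral_indicator (hE k)]
    simp [Measure.restrict_apply (hAm k), Measure.real]
  have hlow : p * (μ (A k)).toReal ≤ (μ (A k ∩ E k)).toReal := by
    have h1 : ∫ ω in A k, p ∂μ ≤ ∫ ω in A k, (μ[(E k).indicator (fun _ => (1 : ℝ)) | ℱ k]) ω ∂μ := by
      refine setIntegral_mono_ae_restrict (integrable_const p).integrableOn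
        integrable_condExp.integrableOn (ae_restrict_of_ae (hEp k))
    rw [hset] at h1
    simpa [mul_comm, Measure.real] using h1
  -- arithmetic
  have hfinA : μ (A k) ≠ ⊤ := measure_ne_top μ _
  have hsplit : (μ (A k)).toReal = (μ (A k ∩ E k)).toReal + (μ (A k ∩ (E k)ᶜ)).toReal := by
    have hd := measure_inter_add_diff (μ := μ) (A k) (hE k)
    rw [Set.diff_eq] at hd
    rw [← hd, ENNReal.toReal_add (measure_ne_top μ _) (measure_ne_top μ _)]
  set a := (μ (A k ∩ E k)).toReal
  set b := (μ (A k ∩ (E k)ᶜ)).toReal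
  have ha0 : 0 ≤ a := ENNReal.toReal_nonneg
  have hb : b ≤ (1 - p) / p * a := by
    have ht : p * (a + b) ≤ a := by rw [← hsplit]; exact hlow
    have hb0 : 0 ≤ b := ENNReal.toReal_nonneg
    rw [div_mul_eq_mul_div, le_div_iff₀ hp0]
    nlinarith
  calc μ (A k ∩ (E k)ᶜ) = ENNReal.ofReal b := (ENNReal.ofReal_toReal (measure_ne_top μ _)).symm
    _ ≤ ENNReal.ofReal ((1 - p) / p * a) := ENNReal.ofReal_le_ofReal hb
    _ = c * ENNReal.ofReal a := by
        rw [ENNReal.ofReal_mul (div_nonneg (by linarith) hp0.le)]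
    _ = c * μ (A k ∩ E k) := by rw [ENNReal.ofReal_toReal (measure_ne_top μ _)]
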